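/- Define K(v₁,v₂) := 2·ψ(r)·K₁(r) + v₁²·(2·ψ(r)·K₂(r) − 4·K₁(r)²) + v₂²·K₁(r)·(5·K₁(r) + K₂(r)·r²), where r := √(v₁²+v₂²), K₁(r) := ψ′(r)/r and K₂(r) := (1/r)·(ψ′(r)/r)′. Then for every v = (v₁,v₂) ∈ ℝ² with 0 < |v| < ϑ₁ and |v| ≠ π, one has K(v₁,v₂) = (2/(Υ(|v|)³·|v|))·[ (−Υ″(|v|)/|v|)·v₁² + (−Υ′(|v|)/sin²|v|)·v₂² ]. -/

import Mathlib

open Real MeasureTheory Asymptotics Filter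

noncomputable section
open scoped Classical
open scoped Topology

/-- `ψ(r) = (1 − r·cot r)/r²`, extended continuously by `ψ(0) := 1/3`. -/
def psi (r : ℝ) : ℝ := if r = 0 then 1/3 else (1 - r * (Real.cos r / Real.sin r)) / r ^ 2

/-- `K₁(r) := ψ′(r)/r`. -/
def K1 (r : ℝ) : ℝ := deriv psi r / r

/-- `K₂(r) := (1/r)·(ψ′(r)/r)′`. -/
def K2 (r : ℝ) : ℝ := deriv (fun s => deriv psi s / s) r / r

/-- `Υ(r) = r²·sin r/(sin r − r·cos r)` with `Υ(0) := 3`. -/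
def Ups (r : ℝ) : ℝ :=
  if r = 0 then 3 else r ^ 2 * Real.sin r / (Real.sin r - r * Real.cos r)

lemma D_pos {ϑ x : ℝ} (hϑ : ϑ ∈ Set.Ioo Real.pi (3 * Real.pi / 2)) (hϑtan : Real.tan ϑ = ϑ)
    (hx0 : 0 < x) (hxϑ : x < ϑ) : 0 < Real.sin x - x * Real.cos x := by
  have hasD : ∀ y : ℝ, HasDerivAt (fun z => Real.sin z - z * Real.cos z) (y * Real.sin y) y := by
    intro y
    have := (Real.hasDerivAt_sin y).sub ((hasDerivAt_id y).mul (Real.hasDerivAt_cos y))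
    exact this.congr_deriv (by simp)
  rcases le_or_gt x Real.pi with hle | hgt
  · -- strict mono on [0, π]
    have mono : StrictMonoOn (fun z => Real.sin z - z * Real.cos z) (Set.Icc 0 Real.pi) := by
      apply strictMonoOn_of_deriv_pos (convex_Icc 0 Real.pi)
      · exact (Real.continuous_sin.sub (continuous_id.mul Real.continuous_cos)).continuousOn
      · intro y hy
        rw [interior_Icc] at hy
        rw [(hasD y).deriv]
        exact mul_pos hy.1 (Real.sin_pos_of_pos_of_lt_pi hy.1 hy.2)
    have := mono (Set.mem_Icc.2 ⟨le_refl 0, Real.pi_pos.le⟩)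
      (Set.mem_Icc.2 ⟨hx0.le, hle⟩) hx0
    simpa using this
  · -- π < x < ϑ : cos x < 0 and tan x < x
    have hx32 : x < 3 * Real.pi / 2 := hxϑ.trans hϑ.2
    have hcos : Real.cos x < 0 := by
      apply Real.cos_neg_of_pi_div_two_lt_of_lt
      · linarith [Real.pi_pos]
      · linarith
    have hcosne : Real.cos x ≠ 0 := hcos.ne
    have hsin : Real.sin x < 0 := by
      have : Real.sin (x - Real.pi) > 0 :=
        Real.sin_pos_of_pos_of_lt_pi (by linarith) (by linarith [Real.pi_pos])
      rw [Real.sin_sub_pi] at this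
      linarith
    -- g = tan - id strictly mono on [π, ϑ]
    have mono : StrictMonoOn (fun z => Real.tan z - z) (Set.Icc Real.pi ϑ) := by
      apply strictMonoOn_of_deriv_pos (convex_Icc Real.pi ϑ)
      · intro y hy
        have hyc : Real.cos y < 0 := by
          apply Real.cos_neg_of_pi_div_two_lt_of_lt
          · linarith [Real.pi_pos, hy.1]
          · have := hy.2; have := hϑ.2; linarith
        exact ((Real.continuousAt_tan.2 hyc.ne).sub continuousAt_id).continuousWithinAt
      · intro y hy
        rw [interior_Icc] at hy
        have hyc : Real.cos y < 0 := by
          apply Real.cos_neg_of_pi_div_two_lt_of_lt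
          · linarith [Real.pi_pos, hy.1]
          · have := hy.2; have := hϑ.2; linarith
        have hysin : Real.sin y < 0 := by
          have : Real.sin (y - Real.pi) > 0 :=
            Real.sin_pos_of_pos_of_lt_pi (by linarith [hy.1])
              (by have := hy.2; have := hϑ.2; linarith [Real.pi_pos])
          rw [Real.sin_sub_pi] at this
          linarith
        have hd : HasDerivAt (fun z => Real.tan z - z) (1 / Real.cos y ^ 2 - 1) y :=
          (Real.hasDerivAt_tan hyc.ne).sub (hasDerivAt_id y)
        rw [hd.deriv]
        have h1 : Real.cos y ^ 2 < 1 := by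
          nlinarith [Real.sin_sq_add_cos_sq y]
        have h2 : 0 < Real.cos y ^ 2 := by nlinarith
        rw [sub_pos, lt_div_iff₀ h2, one_mul]
        exact h1
    have hgx : Real.tan x - x < Real.tan ϑ - ϑ :=
      mono (Set.mem_Icc.2 ⟨hgt.le, hxϑ.le⟩) (Set.mem_Icc.2 ⟨hϑ.1.le, le_refl _⟩) hxϑ
    rw [hϑtan, sub_self] at hgx
    have htan : Real.tan x = Real.sin x / Real.cos x := Real.tan_eq_sin_div_cos x
    rw [htan] at hgx
    have : Real.sin x / Real.cos x < x := by linarith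
    calc (0:ℝ) < Real.cos x * (Real.sin x / Real.cos x - x) := by
            apply mul_pos_of_neg_of_neg hcos; linarith
      _ = Real.sin x - x * Real.cos x := by field_simp

lemma sin_ne {ϑ x : ℝ} (hϑ : ϑ ∈ Set.Ioo Real.pi (3 * Real.pi / 2))
    (hx0 : 0 < x) (hxϑ : x < ϑ) (hxπ : x ≠ Real.pi) : Real.sin x ≠ 0 := by
  rcases lt_or_gt_of_ne hxπ with h | h
  · exact (Real.sin_pos_of_pos_of_lt_pi hx0 h).ne'
  · have : Real.sin (x - Real.pi) > 0 :=
      Real.sin_pos_of_pos_of_lt_pi (by linarith) (by have := hxϑ.trans hϑ.2; linarith [Real.pi_pos])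
    rw [Real.sin_sub_pi] at this
    linarith


lemma hasDerivAt_psi {x : ℝ} (hx : x ≠ 0) (hs : Real.sin x ≠ 0) :
    HasDerivAt psi ((x ^ 2 + x * Real.sin x * Real.cos x - 2 * Real.sin x ^ 2) / (x ^ 3 * Real.sin x ^ 2)) x := by
  have hopen : {y : ℝ | y ≠ 0 ∧ Real.sin y ≠ 0} ∈ 𝓝 x := by
    have : IsOpen {y : ℝ | y ≠ 0 ∧ Real.sin y ≠ 0} :=
      (isOpen_ne.preimage continuous_id).inter (isOpen_ne.preimage Real.continuous_sin)
    exact this.mem_nhds ⟨hx, hs⟩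
  have heq : psi =ᶠ[𝓝 x] fun y => (1 - y * (Real.cos y / Real.sin y)) / y ^ 2 := by
    filter_upwards [hopen] with y hy
    simp [psi, hy.1]
  have h1 : HasDerivAt (fun y => Real.cos y / Real.sin y)
      ((-Real.sin x * Real.sin x - Real.cos x * Real.cos x) / Real.sin x ^ 2) x :=
    (Real.hasDerivAt_cos x).div (Real.hasDerivAt_sin x) hs
  have h2 : HasDerivAt (fun y => 1 - y * (Real.cos y / Real.sin y))
      (0 - (1 * (Real.cos x / Real.sin x) + x * ((-Real.sin x * Real.sin x - Real.cos x * Real.cos x) / Real.sin x ^ 2))) x :=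
    (hasDerivAt_const x (1:ℝ)).sub ((hasDerivAt_id x).mul h1)
  have h3 : HasDerivAt (fun y : ℝ => y ^ 2) (2 * x ^ 1) x := hasDerivAt_pow 2 x
  have h4 := h2.div h3 (pow_ne_zero 2 hx)
  refine HasDerivAt.congr_of_eventuallyEq ?_ heq
  refine h4.congr_deriv ?_
  field_simp
  linear_combination ((1) * x ^ 2) * Real.sin_sq_add_cos_sq x

lemma hasDerivAt_K1fun {x : ℝ} (hx : x ≠ 0) (hs : Real.sin x ≠ 0) :
    HasDerivAt (fun y => deriv psi y / y)
      ((8 * Real.sin x ^ 3 - 3 * x * Real.sin x ^ 2 * Real.cos x - 3 * x ^ 2 * Real.sin x - 2 * x ^ 3 * Real.cos x)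
        / (x ^ 5 * Real.sin x ^ 3)) x := by
  have hopen : {y : ℝ | y ≠ 0 ∧ Real.sin y ≠ 0} ∈ 𝓝 x := by
    have : IsOpen {y : ℝ | y ≠ 0 ∧ Real.sin y ≠ 0} :=
      (isOpen_ne.preimage continuous_id).inter (isOpen_ne.preimage Real.continuous_sin)
    exact this.mem_nhds ⟨hx, hs⟩
  have heq : (fun y => deriv psi y / y) =ᶠ[𝓝 x]
      fun y => (y ^ 2 + y * Real.sin y * Real.cos y - 2 * Real.sin y ^ 2) / (y ^ 4 * Real.sin y ^ 2) := by
    filter_upwards [hopen] with y hy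
    rw [(hasDerivAt_psi hy.1 hy.2).deriv]
    field_simp
  have hN : HasDerivAt (fun y => y ^ 2 + y * Real.sin y * Real.cos y - 2 * Real.sin y ^ 2)
      (2 * x ^ 1 + ((1 * Real.sin x + x * Real.cos x) * Real.cos x + x * Real.sin x * -Real.sin x)
        - 2 * ((2:ℕ) * Real.sin x ^ 1 * Real.cos x)) x := by
    exact ((hasDerivAt_pow 2 x).add (((hasDerivAt_id x).mul (Real.hasDerivAt_sin x)).mul
      (Real.hasDerivAt_cos x))).sub (((Real.hasDerivAt_sin x).pow 2).const_mul 2)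
  have hQ : HasDerivAt (fun y => y ^ 4 * Real.sin y ^ 2)
      (4 * x ^ 3 * Real.sin x ^ 2 + x ^ 4 * ((2:ℕ) * Real.sin x ^ 1 * Real.cos x)) x := by
    exact (hasDerivAt_pow 4 x).mul ((Real.hasDerivAt_sin x).pow 2)
  have h4 := hN.div hQ (by positivity)
  refine HasDerivAt.congr_of_eventuallyEq ?_ heq
  refine h4.congr_deriv ?_
  field_simp
  linear_combination ((-1) * x ^ 2 * Real.sin x) * Real.sin_sq_add_cos_sq x

lemma hasDerivAt_Ups {x : ℝ} (hx : x ≠ 0) (hD : Real.sin x - x * Real.cos x ≠ 0) :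
    HasDerivAt Ups ((2 * x * Real.sin x ^ 2 - x ^ 2 * Real.sin x * Real.cos x - x ^ 3)
      / (Real.sin x - x * Real.cos x) ^ 2) x := by
  have hopen : {y : ℝ | y ≠ 0 ∧ Real.sin y - y * Real.cos y ≠ 0} ∈ 𝓝 x := by
    have : IsOpen {y : ℝ | y ≠ 0 ∧ Real.sin y - y * Real.cos y ≠ 0} :=
      (isOpen_ne.preimage continuous_id).inter (isOpen_ne.preimage
        (Real.continuous_sin.sub (continuous_id.mul Real.continuous_cos)))
    exact this.mem_nhds ⟨hx, hD⟩
  have heq : Ups =ᶠ[𝓝 x] fun y => y ^ 2 * Real.sin y / (Real.sin y - y * Real.cos y) := by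
    filter_upwards [hopen] with y hy
    simp [Ups, hy.1]
  have hN : HasDerivAt (fun y => y ^ 2 * Real.sin y)
      (2 * x ^ 1 * Real.sin x + x ^ 2 * Real.cos x) x :=
    (hasDerivAt_pow 2 x).mul (Real.hasDerivAt_sin x)
  have hQ : HasDerivAt (fun y => Real.sin y - y * Real.cos y)
      (Real.cos x - (1 * Real.cos x + x * -Real.sin x)) x :=
    (Real.hasDerivAt_cos x) |> fun hc => (Real.hasDerivAt_sin x).sub ((hasDerivAt_id x).mul hc)
  have h4 := hN.div hQ hD
  refine HasDerivAt.congr_of_eventuallyEq ?_ heq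
  refine h4.congr_deriv ?_
  field_simp
  linear_combination ((-1) * x ^ 2) * Real.sin_sq_add_cos_sq x

lemma hasDerivAt_derivUps {x : ℝ} (hx : x ≠ 0) (hD : Real.sin x - x * Real.cos x ≠ 0) :
    HasDerivAt (deriv Ups)
      ((2 * Real.sin x ^ 4 - 2 * x * Real.sin x ^ 3 * Real.cos x - 6 * x ^ 2 * Real.sin x ^ 2
          + 10 * x ^ 3 * Real.sin x * Real.cos x - 4 * x ^ 4 + 6 * x ^ 4 * Real.sin x ^ 2
          - 2 * x ^ 5 * Real.sin x * Real.cos x)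
        / (Real.sin x - x * Real.cos x) ^ 4) x := by
  have hopen : {y : ℝ | y ≠ 0 ∧ Real.sin y - y * Real.cos y ≠ 0} ∈ 𝓝 x := by
    have : IsOpen {y : ℝ | y ≠ 0 ∧ Real.sin y - y * Real.cos y ≠ 0} :=
      (isOpen_ne.preimage continuous_id).inter (isOpen_ne.preimage
        (Real.continuous_sin.sub (continuous_id.mul Real.continuous_cos)))
    exact this.mem_nhds ⟨hx, hD⟩
  have heq : deriv Ups =ᶠ[𝓝 x] fun y =>
      (2 * y * Real.sin y ^ 2 - y ^ 2 * Real.sin y * Real.cos y - y ^ 3)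
        / (Real.sin y - y * Real.cos y) ^ 2 := by
    filter_upwards [hopen] with y hy
    exact (hasDerivAt_Ups hy.1 hy.2).deriv
  have hN : HasDerivAt (fun y => 2 * y * Real.sin y ^ 2 - y ^ 2 * Real.sin y * Real.cos y - y ^ 3)
      ((2 * 1 * Real.sin x ^ 2 + 2 * x * ((2:ℕ) * Real.sin x ^ 1 * Real.cos x))
        - ((2 * x ^ 1 * Real.sin x + x ^ 2 * Real.cos x) * Real.cos x + x ^ 2 * Real.sin x * -Real.sin x)
        - 3 * x ^ 2) x := by
    exact ((((hasDerivAt_id x).const_mul 2).mul ((Real.hasDerivAt_sin x).pow 2)).sub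
      ((((hasDerivAt_pow 2 x).mul (Real.hasDerivAt_sin x))).mul (Real.hasDerivAt_cos x))).sub
      (hasDerivAt_pow 3 x)
  have hQ : HasDerivAt (fun y => (Real.sin y - y * Real.cos y) ^ 2)
      ((2:ℕ) * (Real.sin x - x * Real.cos x) ^ 1 * (Real.cos x - (1 * Real.cos x + x * -Real.sin x))) x :=
    ((Real.hasDerivAt_sin x).sub ((hasDerivAt_id x).mul (Real.hasDerivAt_cos x))).pow 2
  have h4 := hN.div hQ (pow_ne_zero 2 hD)
  refine HasDerivAt.congr_of_eventuallyEq ?_ heq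
  refine h4.congr_deriv ?_
  field_simp
  linear_combination ((-3) * x ^ 2 * Real.sin x ^ 2 + (4) * x ^ 3 * Real.sin x * Real.cos x + (-4) * x ^ 4 + (-1) * x ^ 4 * Real.cos x ^ 2) * Real.sin_sq_add_cos_sq x

/-- the identity
`K(v₁,v₂) = (2/(Υ(|v|)³|v|))·[(−Υ″(|v|)/|v|)v₁² + (−Υ′(|v|)/sin²|v|)v₂²]`
for `0 < |v| < ϑ₁`, `|v| ≠ π`, where
`K = 2ψK₁ + v₁²(2ψK₂ − 4K₁²) + v₂²K₁(5K₁ + K₂r²)`. -/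
theorem statement18 (ϑ : ℝ) (hϑ : ϑ ∈ Set.Ioo Real.pi (3 * Real.pi / 2)) (hϑtan : Real.tan ϑ = ϑ) :
    ∀ v₁ v₂ r : ℝ, r = Real.sqrt (v₁ ^ 2 + v₂ ^ 2) → 0 < r → r < ϑ → r ≠ Real.pi →
      2 * psi r * K1 r + v₁ ^ 2 * (2 * psi r * K2 r - 4 * K1 r ^ 2) +
          v₂ ^ 2 * K1 r * (5 * K1 r + K2 r * r ^ 2)
        = 2 / (Ups r ^ 3 * r) *
            (-deriv (deriv Ups) r / r * v₁ ^ 2 +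
              -deriv Ups r / Real.sin r ^ 2 * v₂ ^ 2) := by
  intro v₁ v₂ r hr hr0 hrϑ hrπ
  have hv : v₁ ^ 2 + v₂ ^ 2 = r ^ 2 := by rw [hr, Real.sq_sqrt (by positivity)]
  have hrne : r ≠ 0 := hr0.ne'
  have hs : Real.sin r ≠ 0 := sin_ne hϑ hr0 hrϑ hrπ
  have hDpos := D_pos hϑ hϑtan hr0 hrϑ
  have hD : Real.sin r - r * Real.cos r ≠ 0 := hDpos.ne'
  simp only [K1, K2]
  rw [(hasDerivAt_psi hrne hs).deriv, (hasDerivAt_K1fun hrne hs).deriv,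
      (hasDerivAt_Ups hrne hD).deriv, (hasDerivAt_derivUps hrne hD).deriv]
  simp only [psi, Ups, if_neg hrne]
  field_simp
  linear_combination ((12) * r ^ 4 * Real.sin r ^ 2 * v₁ ^ 2 + (-4) * r ^ 5 * Real.sin r * Real.cos r * v₁ ^ 2) * Real.sin_sq_add_cos_sq r + ((4) * Real.sin r ^ 6 + (-10) * r * Real.sin r ^ 5 * Real.cos r + (-2) * r ^ 2 * Real.sin r ^ 4 + (8) * r ^ 2 * Real.sin r ^ 4 * Real.cos r ^ 2 + (4) * r ^ 3 * Real.sin r ^ 3 * Real.cos r + (-2) * r ^ 3 * Real.sin r ^ 3 * Real.cos r ^ 3 + (-2) * r ^ 4 * Real.sin r ^ 2 * Real.cos r ^ 2) * hv
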